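/- For every real number x, |x - tanh(x)| ≤ min(|x|, |x|³). -/

import Mathlib

open Real

private lemma sinh_le_mul_cosh {x : ℝ} (hx : 0 ≤ x) : Real.sinh x ≤ x * Real.cosh x := by
  have key : MonotoneOn (fun y : ℝ => y * Real.cosh y - Real.sinh y) (Set.Ici 0) := by
    apply monotoneOn_of_deriv_nonneg (convex_Ici 0)
    · exact (((continuous_id.mul Real.continuous_cosh).sub Real.continuous_sinh)).continuousOn
    · intro y hy
      exact (((hasDerivAt_id y).mul (Real.hasDerivAt_cosh y)).sub
        (Real.hasDerivAt_sinh y)).differentiableAt.differentiableWithinAt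
    · intro y hy
      rw [interior_Ici] at hy
      have hd : HasDerivAt (fun y : ℝ => y * Real.cosh y - Real.sinh y)
          (1 * Real.cosh y + y * Real.sinh y - Real.cosh y) y :=
        ((hasDerivAt_id y).mul (Real.hasDerivAt_cosh y)).sub (Real.hasDerivAt_sinh y)
      rw [hd.deriv]
      have h := Real.sinh_nonneg_iff.mpr hy.le
      nlinarith [mul_nonneg hy.le h]
  have h0 : (0 : ℝ) * Real.cosh 0 - Real.sinh 0 = 0 := by simp
  have := key (Set.self_mem_Ici) (Set.mem_Ici.mpr hx) hx
  norm_num [Real.sinh_zero, Real.cosh_zero] at this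
  nlinarith [this]

private lemma mul_cosh_sub_sinh_le {x : ℝ} (hx : 0 ≤ x) :
    x * Real.cosh x - Real.sinh x ≤ x ^ 3 * Real.cosh x := by
  have key : MonotoneOn
      (fun y : ℝ => y ^ 3 * Real.cosh y - (y * Real.cosh y - Real.sinh y)) (Set.Ici 0) := by
    apply monotoneOn_of_deriv_nonneg (convex_Ici 0)
    · exact (((continuous_pow 3).mul Real.continuous_cosh).sub
        ((continuous_id.mul Real.continuous_cosh).sub Real.continuous_sinh)).continuousOn
    · intro y _
      exact ((((hasDerivAt_pow 3 y).mul (Real.hasDerivAt_cosh y)).sub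
        (((hasDerivAt_id y).mul (Real.hasDerivAt_cosh y)).sub
          (Real.hasDerivAt_sinh y))).differentiableAt).differentiableWithinAt
    · intro y hy
      rw [interior_Ici] at hy
      have hd : HasDerivAt (fun y : ℝ => y ^ 3 * Real.cosh y - (y * Real.cosh y - Real.sinh y))
          ((↑3 * y ^ 2) * Real.cosh y + y ^ 3 * Real.sinh y -
            (1 * Real.cosh y + y * Real.sinh y - Real.cosh y)) y :=
        ((hasDerivAt_pow 3 y).mul (Real.hasDerivAt_cosh y)).sub
          (((hasDerivAt_id y).mul (Real.hasDerivAt_cosh y)).sub (Real.hasDerivAt_sinh y))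
      rw [hd.deriv]
      have hs : Real.sinh y ≤ y * Real.cosh y := sinh_le_mul_cosh hy.le
      have hsn : 0 ≤ Real.sinh y := Real.sinh_nonneg_iff.mpr hy.le
      have hc : 0 < Real.cosh y := Real.cosh_pos _
      rcases le_or_gt y 1 with h1 | h1
      · nlinarith [mul_nonneg (mul_nonneg hy.le hy.le) hc.le,
          mul_le_mul_of_nonneg_left hs (mul_nonneg hy.le (by nlinarith : (0:ℝ) ≤ 1 - y^2))]
      · nlinarith [mul_nonneg (mul_nonneg hy.le (by nlinarith : (0:ℝ) ≤ y^2 - 1)) hsn,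
          mul_nonneg (mul_nonneg hy.le hy.le) hc.le]
  have := key (Set.self_mem_Ici) (Set.mem_Ici.mpr hx) hx
  norm_num [Real.sinh_zero, Real.cosh_zero] at this
  nlinarith [this]

private lemma main_nonneg {x : ℝ} (hx : 0 ≤ x) :
    |x - Real.tanh x| ≤ min |x| (|x| ^ 3) := by
  have hc : 0 < Real.cosh x := Real.cosh_pos _
  have ht : Real.tanh x = Real.sinh x / Real.cosh x := Real.tanh_eq_sinh_div_cosh x
  have hsn : 0 ≤ Real.sinh x := Real.sinh_nonneg_iff.mpr hx
  have h1 : Real.tanh x ≤ x := by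
    rw [ht, div_le_iff₀ hc]
    exact sinh_le_mul_cosh hx
  have h0 : 0 ≤ Real.tanh x := by
    rw [ht]
    positivity
  have h2 : x - Real.tanh x ≤ x ^ 3 := by
    rw [ht, sub_div' hc.ne', div_le_iff₀ hc]
    nlinarith [mul_cosh_sub_sinh_le hx]
  rw [abs_of_nonneg hx, abs_of_nonneg (by linarith : 0 ≤ x - Real.tanh x)]
  exact le_min (by linarith) h2

theorem abs_sub_tanh_le_min (x : ℝ) :
    |x - Real.tanh x| ≤ min |x| (|x| ^ 3) := by
  rcases le_or_gt 0 x with hx | hx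
  · exact main_nonneg hx
  · have h := main_nonneg (x := -x) (by linarith)
    rw [Real.tanh_neg] at h
    rw [abs_neg] at h
    calc |x - Real.tanh x| = |-x - -Real.tanh x| := by rw [← abs_neg]; ring_nf
      _ ≤ min |x| (|x| ^ 3) := by simpa using h
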